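/- Let P_t(x,y) = P_t(x−y) with P_t(x) = (1/(2πt)) exp(−|x|²/(2t)). For all T₀, T₁ ∈ (0,∞), p ∈ ℝ_{≥0}, and y, y' ∈ ℝ²: ∫_{ℝ²} P_{T₀}(y,x') P_{T₁}(x',y') / (1 + |x'|^p) dx' ≤ C(p) (1 + T₁^{p/2}) / (1 + |y'|^p) · P_{T₀ + 2T₁}(y − y'). -/

import Mathlib

open MeasureTheory Real
open scoped RealInnerProductSpace

/-- The two-dimensional heat kernel `P_t(x) = (2πt)⁻¹ exp(−‖x‖²/(2t))`. -/
noncomputable def heatK (t : ℝ) (x : EuclideanSpace ℝ (Fin 2)) : ℝ :=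
  (2 * Real.pi * t)⁻¹ * Real.exp (-‖x‖ ^ 2 / (2 * t))

noncomputable abbrev E2 := EuclideanSpace ℝ (Fin 2)

lemma gauss_integrable {b : ℝ} (hb : 0 < b) :
    Integrable fun v : E2 => Real.exp (-b * ‖v‖ ^ 2) := by
  have h := GaussianFourier.integrable_cexp_neg_mul_sq_norm_add (V := E2) (b := (b : ℂ))
      (by simpa using hb) 0 0
  have h2 := h.re
  refine h2.congr ?_
  filter_upwards with v
  simp [Complex.exp_ofReal_re, ← Complex.ofReal_pow, ← Complex.ofReal_neg,
    ← Complex.ofReal_mul]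

lemma heatK_exponent_identity {s t : ℝ} (hs : 0 < s) (ht : 0 < t) (a b x : E2) :
    -‖a - x‖ ^ 2 / (2 * s) + -‖x - b‖ ^ 2 / (2 * t) =
      -‖a - b‖ ^ 2 / (2 * (s + t)) +
        -((s + t) / (2 * s * t)) * ‖x - ((t / (s + t)) • a + (s / (s + t)) • b)‖ ^ 2 := by
  have hst : 0 < s + t := by linarith
  set c : E2 := (t / (s + t)) • a + (s / (s + t)) • b with hc
  have e1 : ‖a - x‖ ^ 2 = ‖a‖ ^ 2 - 2 * ⟪a, x⟫ + ‖x‖ ^ 2 := norm_sub_sq_real a x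
  have e2 : ‖x - b‖ ^ 2 = ‖x‖ ^ 2 - 2 * ⟪x, b⟫ + ‖b‖ ^ 2 := norm_sub_sq_real x b
  have e3 : ‖a - b‖ ^ 2 = ‖a‖ ^ 2 - 2 * ⟪a, b⟫ + ‖b‖ ^ 2 := norm_sub_sq_real a b
  have e4 : ‖x - c‖ ^ 2 = ‖x‖ ^ 2 - 2 * ⟪x, c⟫ + ‖c‖ ^ 2 := norm_sub_sq_real x c
  have e5 : ⟪x, c⟫ = (t / (s + t)) * ⟪a, x⟫ + (s / (s + t)) * ⟪x, b⟫ := by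
    rw [hc, inner_add_right, real_inner_smul_right, real_inner_smul_right,
      real_inner_comm x a]
  have e6 : ‖c‖ ^ 2 = (t / (s + t)) ^ 2 * ‖a‖ ^ 2
      + 2 * ((t / (s + t)) * (s / (s + t))) * ⟪a, b⟫ + (s / (s + t)) ^ 2 * ‖b‖ ^ 2 := by
    rw [hc, norm_add_sq_real, norm_smul, norm_smul, real_inner_smul_left,
      real_inner_smul_right, Real.norm_eq_abs, Real.norm_eq_abs,
      abs_of_pos (by positivity), abs_of_pos (by positivity)]
    ring
  rw [e1, e2, e3, e4, e5, e6]
  field_simp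
  ring

lemma heatK_pos {t : ℝ} (ht : 0 < t) (x : E2) : 0 < heatK t x := by
  unfold heatK
  have := Real.pi_pos
  positivity

lemma heatK_conv {s t : ℝ} (hs : 0 < s) (ht : 0 < t) (a b : E2) :
    Integrable (fun x : E2 => heatK s (a - x) * heatK t (x - b)) ∧
      (∫ x : E2, heatK s (a - x) * heatK t (x - b)) = heatK (s + t) (a - b) := by
  have hst : 0 < s + t := by linarith
  have hπ := Real.pi_pos
  set β : ℝ := (s + t) / (2 * s * t) with hβ
  have hβpos : 0 < β := by positivity
  set c : E2 := (t / (s + t)) • a + (s / (s + t)) • b with hc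
  have key : ∀ x : E2, heatK s (a - x) * heatK t (x - b) =
      ((2 * Real.pi * s)⁻¹ * (2 * Real.pi * t)⁻¹
        * Real.exp (-‖a - b‖ ^ 2 / (2 * (s + t))))
        * Real.exp (-β * ‖x - c‖ ^ 2) := by
    intro x
    unfold heatK
    rw [mul_mul_mul_comm, ← Real.exp_add, heatK_exponent_identity hs ht a b x,
      Real.exp_add]
    ring
  have hint : Integrable fun x : E2 => Real.exp (-β * ‖x - c‖ ^ 2) :=
    (gauss_integrable hβpos).comp_sub_right c
  constructor
  · refine (hint.const_mul ((2 * Real.pi * s)⁻¹ * (2 * Real.pi * t)⁻¹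
      * Real.exp (-‖a - b‖ ^ 2 / (2 * (s + t))))).congr ?_
    filter_upwards with x
    rw [key x]
  · have : (∫ x : E2, heatK s (a - x) * heatK t (x - b)) =
        ((2 * Real.pi * s)⁻¹ * (2 * Real.pi * t)⁻¹
          * Real.exp (-‖a - b‖ ^ 2 / (2 * (s + t))))
          * ∫ x : E2, Real.exp (-β * ‖x - c‖ ^ 2) := by
      rw [← integral_const_mul]
      exact integral_congr_ae (Filter.Eventually.of_forall key)
    rw [this, integral_sub_right_eq_self (fun x : E2 => Real.exp (-β * ‖x‖ ^ 2)) c,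
      GaussianFourier.integral_rexp_neg_mul_sq_norm hβpos]
    have hrank : (Module.finrank ℝ E2 : ℝ) = 2 := by
      simp [finrank_euclideanSpace]
    rw [hrank]
    norm_num
    unfold heatK
    rw [hβ]
    field_simp

lemma pow_exp_bound (p : ℝ) (hp : 0 ≤ p) {u : ℝ} (hu : 0 ≤ u) :
    u ^ (p / 2) * Real.exp (-u) ≤ p ^ (p / 2) := by
  rcases eq_or_lt_of_le hp with h0 | h0
  · simp only [← h0, zero_div, Real.rpow_zero, one_mul]
    exact Real.exp_le_one_iff.2 (by linarith)
  · have hq : 0 < p / 2 := by linarith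
    have h1 : u ≤ p * Real.exp (u / p) := by
      have h := mul_le_mul_of_nonneg_left (Real.add_one_le_exp (u / p)) h0.le
      rw [mul_add, mul_one, mul_div_cancel₀ _ h0.ne'] at h
      linarith
    have h2 : u ^ (p / 2) ≤ (p * Real.exp (u / p)) ^ (p / 2) :=
      Real.rpow_le_rpow hu h1 hq.le
    have h3 : (p * Real.exp (u / p)) ^ (p / 2)
        = p ^ (p / 2) * Real.exp (u / 2) := by
      rw [Real.mul_rpow h0.le (Real.exp_pos _).le, ← Real.exp_mul]
      congr 1
      field_simp
    calc u ^ (p / 2) * Real.exp (-u)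
        ≤ p ^ (p / 2) * Real.exp (u / 2) * Real.exp (-u) := by
          exact mul_le_mul_of_nonneg_right (h3 ▸ h2) (Real.exp_pos _).le
      _ = p ^ (p / 2) * Real.exp (u / 2 + -u) := by rw [Real.exp_add]; ring
      _ ≤ p ^ (p / 2) * 1 := by
          refine mul_le_mul_of_nonneg_left ?_ (Real.rpow_nonneg h0.le _)
          exact Real.exp_le_one_iff.2 (by linarith)
      _ = p ^ (p / 2) := mul_one _

lemma heatK_weight (p : ℝ) (hp : 0 ≤ p) {t : ℝ} (ht : 0 < t) (z : E2) :
    heatK t z * (1 + ‖z‖ ^ p) ≤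
      2 * (1 + 2 ^ p * p ^ (p / 2)) * (1 + t ^ (p / 2)) * heatK (2 * t) z := by
  have hπ := Real.pi_pos
  set u : ℝ := ‖z‖ ^ 2 / (4 * t) with hu
  have hu0 : 0 ≤ u := by positivity
  have hsplit : heatK t z = 2 * heatK (2 * t) z * Real.exp (-u) := by
    unfold heatK
    have : -‖z‖ ^ 2 / (2 * t) = -‖z‖ ^ 2 / (2 * (2 * t)) + -u := by
      rw [hu]; field_simp; ring
    rw [this, Real.exp_add]
    field_simp
  have hz : ‖z‖ ^ p = (4 * t) ^ (p / 2) * u ^ (p / 2) := by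
    rw [← Real.mul_rpow (by positivity) hu0, hu]
    rw [mul_div_cancel₀ _ (by positivity : (4 : ℝ) * t ≠ 0)]
    rw [← Real.rpow_natCast ‖z‖ 2, ← Real.rpow_mul (norm_nonneg z)]
    congr 1
    push_cast
    ring
  have hfour : (4 : ℝ) ^ (p / 2) = 2 ^ p := by
    rw [show (4 : ℝ) = 2 ^ (2 : ℝ) by norm_num [Real.rpow_natCast],
      ← Real.rpow_mul (by norm_num)]
    congr 1
    ring
  have hbound : Real.exp (-u) * (1 + ‖z‖ ^ p)
      ≤ (1 + 2 ^ p * p ^ (p / 2)) * (1 + t ^ (p / 2)) := by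
    have hzb : ‖z‖ ^ p * Real.exp (-u) ≤ 2 ^ p * t ^ (p / 2) * p ^ (p / 2) := by
      rw [hz, Real.mul_rpow (by norm_num) ht.le, hfour]
      have hb := pow_exp_bound p hp hu0
      nlinarith [mul_le_mul_of_nonneg_left hb
        (show (0:ℝ) ≤ 2 ^ p * t ^ (p / 2) by positivity)]
    have he1 : Real.exp (-u) ≤ 1 := Real.exp_le_one_iff.2 (by linarith)
    nlinarith [Real.rpow_nonneg (le_of_lt ht) (p / 2),
      Real.rpow_nonneg (show (0:ℝ) ≤ 2 by norm_num) p,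
      Real.rpow_nonneg hp (p / 2), Real.exp_pos (-u),
      mul_nonneg (Real.rpow_nonneg (show (0:ℝ) ≤ 2 by norm_num) p)
        (Real.rpow_nonneg hp (p / 2))]
  have hK2 : 0 < heatK (2 * t) z := heatK_pos (by linarith) z
  calc heatK t z * (1 + ‖z‖ ^ p)
      = 2 * heatK (2 * t) z * (Real.exp (-u) * (1 + ‖z‖ ^ p)) := by
        rw [hsplit]; ring
    _ ≤ 2 * heatK (2 * t) z * ((1 + 2 ^ p * p ^ (p / 2)) * (1 + t ^ (p / 2))) := by
        exact mul_le_mul_of_nonneg_left hbound (by positivity)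
    _ = 2 * (1 + 2 ^ p * p ^ (p / 2)) * (1 + t ^ (p / 2)) * heatK (2 * t) z := by ring

lemma weight_ineq (p : ℝ) (hp : 0 ≤ p) (x y' : E2) :
    1 + ‖y'‖ ^ p ≤ 2 ^ p * ((1 + ‖x‖ ^ p) * (1 + ‖x - y'‖ ^ p)) := by
  have h2p : (1 : ℝ) ≤ 2 ^ p := Real.one_le_rpow (by norm_num) hp
  have hy : ‖y'‖ ≤ ‖x‖ + ‖x - y'‖ := by
    calc ‖y'‖ = ‖x - (x - y')‖ := by congr 1; abel
      _ ≤ ‖x‖ + ‖x - y'‖ := norm_sub_le _ _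
  have hsum : (‖x‖ + ‖x - y'‖) ^ p ≤ 2 ^ p * (‖x‖ ^ p + ‖x - y'‖ ^ p) := by
    have hm : ‖x‖ + ‖x - y'‖ ≤ 2 * max ‖x‖ ‖x - y'‖ := by
      rcases le_total ‖x‖ ‖x - y'‖ with h | h
      · rw [max_eq_right h]; linarith
      · rw [max_eq_left h]; linarith
    calc (‖x‖ + ‖x - y'‖) ^ p ≤ (2 * max ‖x‖ ‖x - y'‖) ^ p :=
          Real.rpow_le_rpow (by positivity) hm hp
      _ = 2 ^ p * (max ‖x‖ ‖x - y'‖) ^ p :=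
          Real.mul_rpow (by norm_num) (le_max_of_le_left (norm_nonneg _))
      _ ≤ 2 ^ p * (‖x‖ ^ p + ‖x - y'‖ ^ p) := by
          refine mul_le_mul_of_nonneg_left ?_ (by positivity)
          rcases le_total ‖x‖ ‖x - y'‖ with h | h
          · rw [max_eq_right h]
            nlinarith [Real.rpow_nonneg (norm_nonneg x) p]
          · rw [max_eq_left h]
            nlinarith [Real.rpow_nonneg (norm_nonneg (x - y')) p]
  have hyp : ‖y'‖ ^ p ≤ 2 ^ p * (‖x‖ ^ p + ‖x - y'‖ ^ p) :=
    le_trans (Real.rpow_le_rpow (norm_nonneg _) hy hp) hsum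
  nlinarith [Real.rpow_nonneg (norm_nonneg x) p,
    Real.rpow_nonneg (norm_nonneg (x - y')) p,
    mul_nonneg (Real.rpow_nonneg (norm_nonneg x) p)
      (Real.rpow_nonneg (norm_nonneg (x - y')) p)]


/-- For every `p ≥ 0` there is `C(p)` such that for all `T₀, T₁ ∈ (0,∞)` and `y, y' ∈ ℝ²`:
`∫ P_{T₀}(y − x') P_{T₁}(x' − y')/(1 + ‖x'‖^p) dx'
  ≤ C (1 + T₁^{p/2})/(1 + ‖y'‖^p) · P_{T₀+2T₁}(y − y')`. -/
theorem stmt_9 (p : ℝ) (hp : 0 ≤ p) :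
    ∃ C : ℝ, 0 < C ∧ ∀ T₀ T₁ : ℝ, 0 < T₀ → 0 < T₁ →
      ∀ y y' : EuclideanSpace ℝ (Fin 2),
        (∫ x' : EuclideanSpace ℝ (Fin 2),
            heatK T₀ (y - x') * heatK T₁ (x' - y') / (1 + ‖x'‖ ^ p))
          ≤ C * (1 + T₁ ^ (p/2)) / (1 + ‖y'‖ ^ p) * heatK (T₀ + 2 * T₁) (y - y') := by
  refine ⟨2 ^ p * (2 * (1 + 2 ^ p * p ^ (p / 2))), by positivity, ?_⟩
  intro T₀ T₁ hT₀ hT₁ y y'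
  set C₂ : ℝ := 2 * (1 + 2 ^ p * p ^ (p / 2)) with hC₂
  set S : ℝ := 1 + T₁ ^ (p / 2) with hS
  set W : ℝ := 1 + ‖y'‖ ^ p with hW
  have hWpos : 0 < W := by rw [hW]; positivity
  have hSpos : 0 < S := by rw [hS]; positivity
  have hC₂pos : 0 < C₂ := by rw [hC₂]; positivity
  have h2T₁ : 0 < 2 * T₁ := by linarith
  obtain ⟨hck_int, hck_eq⟩ := heatK_conv hT₀ h2T₁ y y'
  have hmono : ∀ x : E2,
      heatK T₀ (y - x) * heatK T₁ (x - y') / (1 + ‖x‖ ^ p)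
        ≤ 2 ^ p * C₂ * S / W * (heatK T₀ (y - x) * heatK (2 * T₁) (x - y')) := by
    intro x
    set A : ℝ := heatK T₀ (y - x) with hA
    set B : ℝ := heatK T₁ (x - y') with hB
    set B₂ : ℝ := heatK (2 * T₁) (x - y') with hB₂
    set w : ℝ := 1 + ‖x‖ ^ p with hw
    set V : ℝ := 1 + ‖x - y'‖ ^ p with hV
    have hApos : 0 < A := heatK_pos hT₀ _
    have hBpos : 0 < B := heatK_pos hT₁ _
    have hB₂pos : 0 < B₂ := heatK_pos h2T₁ _
    have hwpos : 0 < w := by rw [hw]; positivity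
    have hVpos : 0 < V := by rw [hV]; positivity
    have hweight : W ≤ 2 ^ p * (w * V) := weight_ineq p hp x y'
    have hkernel : B * V ≤ C₂ * S * B₂ := by
      have := heatK_weight p hp hT₁ (x - y')
      rw [← hB, ← hB₂, ← hV, ← hS, ← hC₂] at this
      calc B * V ≤ 2 * (1 + 2 ^ p * p ^ (p / 2)) * S * B₂ := by
            rw [← hC₂]; linarith [this]
        _ = C₂ * S * B₂ := by rw [hC₂]
    rw [div_mul_eq_mul_div, div_le_div_iff₀ hwpos hWpos]
    nlinarith [mul_le_mul_of_nonneg_left hweight (mul_nonneg hApos.le hBpos.le),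
      mul_le_mul_of_nonneg_left hkernel
        (show (0:ℝ) ≤ A * (2 ^ p * w) by positivity)]
  have hint : Integrable (fun x : E2 =>
      2 ^ p * C₂ * S / W * (heatK T₀ (y - x) * heatK (2 * T₁) (x - y'))) :=
    hck_int.const_mul _
  have hnn : 0 ≤ᵐ[volume] fun x : E2 =>
      heatK T₀ (y - x) * heatK T₁ (x - y') / (1 + ‖x‖ ^ p) := by
    filter_upwards with x
    have := heatK_pos hT₀ (y - x)
    have := heatK_pos hT₁ (x - y')
    positivity
  calc (∫ x' : E2, heatK T₀ (y - x') * heatK T₁ (x' - y') / (1 + ‖x'‖ ^ p))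
      ≤ ∫ x' : E2, 2 ^ p * C₂ * S / W
          * (heatK T₀ (y - x') * heatK (2 * T₁) (x' - y')) :=
        integral_mono_of_nonneg hnn hint (Filter.Eventually.of_forall hmono)
    _ = 2 ^ p * C₂ * S / W * heatK (T₀ + 2 * T₁) (y - y') := by
        rw [integral_const_mul, hck_eq]
    _ = 2 ^ p * (2 * (1 + 2 ^ p * p ^ (p / 2))) * (1 + T₁ ^ (p / 2)) / W
          * heatK (T₀ + 2 * T₁) (y - y') := by
        rw [hC₂, hS]
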